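/- Let Ω ⊆ ℂ be open and preconnected, let A : ℂ → ℂ be holomorphic on Ω with deriv A z ≠ 0 for all z ∈ Ω, and let j : ℝ → ℝ be differentiable. Define u : ℝ² → ℝ by u(x, y) = 2·Re(A(x + i·y)), and assume u satisfies the modified equation with coefficient function j at every point (x, y) with x + i·y ∈ Ω. Then there exists a real constant k such that for all z ∈ Ω, (A'''(z))·(A'(z)) − (A''(z))² = k·(A'(z))⁴, where A', A'', A''' denote the first, second, and third complex derivatives of A. -/

import Mathlib

/-- Partial derivative in the x-direction. -/
noncomputable def px (f : ℝ × ℝ → ℝ) (p : ℝ × ℝ) : ℝ := fderiv ℝ f p (1, 0)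

/-- Partial derivative in the y-direction. -/
noncomputable def py (f : ℝ × ℝ → ℝ) (p : ℝ × ℝ) : ℝ := fderiv ℝ f p (0, 1)

/-- `f` satisfies the minimal surface equation
`(1 + f_y²)·f_xx − 2·f_xy·f_x·f_y + (1 + f_x²)·f_yy = 0` at every point of `Ω`. -/
def SatisfiesMSE (f : ℝ × ℝ → ℝ) (Ω : Set (ℝ × ℝ)) : Prop :=
  ∀ p ∈ Ω,
    (1 + (py f p) ^ 2) * px (px f) p - 2 * py (px f) p * px f p * py f p
      + (1 + (px f p) ^ 2) * py (py f) p = 0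

/-- `u` satisfies the modified equation
`(u_xx − u_yy)·(u_x² − u_y²) + 4·u_xy·u_x·u_y = 2·j(u)·(u_x² + u_y²)`
at every point of `Ω` (real form of `(u_z²·u_z̄z̄ + u_z̄²·u_zz)/(u_z·u_z̄) = j(u)`). -/
def SatisfiesModified (u : ℝ × ℝ → ℝ) (j : ℝ → ℝ) (Ω : Set (ℝ × ℝ)) : Prop :=
  ∀ p ∈ Ω,
    (px (px u) p - py (py u) p) * ((px u p) ^ 2 - (py u p) ^ 2)
      + 4 * py (px u) p * px u p * py u p
      = 2 * j (u p) * ((px u p) ^ 2 + (py u p) ^ 2)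

noncomputable def eC : ℝ × ℝ →L[ℝ] ℂ :=
  Complex.ofRealCLM.coprod (Complex.I • Complex.ofRealCLM)

lemma eC_apply (p : ℝ × ℝ) : eC p = ↑p.1 + ↑p.2 * Complex.I := by
  simp [eC]; ring

lemma eC_e1 : eC (1, 0) = 1 := by simp [eC]
lemma eC_e2 : eC (0, 1) = Complex.I := by simp [eC]

lemma hasFDerivAt_comp_eC {f : ℂ → ℂ} {p : ℝ × ℝ} (h : DifferentiableAt ℂ f (eC p)) :
    HasFDerivAt (fun q => f (eC q))
      ((ContinuousLinearMap.mul ℝ ℂ (deriv f (eC p))).comp eC) p := by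
  have h1 := (h.hasDerivAt.hasFDerivAt.restrictScalars ℝ).comp p eC.hasFDerivAt
  refine h1.congr_fderiv ?_
  refine ContinuousLinearMap.ext fun v => ?_
  simp [mul_comm]

lemma re_comp_hasFDerivAt {f : ℂ → ℂ} {p : ℝ × ℝ} (h : DifferentiableAt ℂ f (eC p)) (r : ℝ) :
    HasFDerivAt (fun q => r * (f (eC q)).re)
      (r • (Complex.reCLM.comp ((ContinuousLinearMap.mul ℝ ℂ (deriv f (eC p))).comp eC))) p := by
  have h1 := (Complex.reCLM.hasFDerivAt.comp p (hasFDerivAt_comp_eC h)).const_mul r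
  exact h1

lemma im_comp_hasFDerivAt {f : ℂ → ℂ} {p : ℝ × ℝ} (h : DifferentiableAt ℂ f (eC p)) (r : ℝ) :
    HasFDerivAt (fun q => r * (f (eC q)).im)
      (r • (Complex.imCLM.comp ((ContinuousLinearMap.mul ℝ ℂ (deriv f (eC p))).comp eC))) p := by
  have h1 := (Complex.imCLM.hasFDerivAt.comp p (hasFDerivAt_comp_eC h)).const_mul r
  exact h1

lemma cast1 (a : ℂ) (J : ℝ) : ((J * (2 * a.re) : ℝ) : ℂ) = ↑J * (a + (starRingEnd ℂ) a) := by
  push_cast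
  rw [Complex.add_conj]
  push_cast; ring

lemma cast2 (a : ℂ) (J : ℝ) : ((J * (2 * (a * Complex.I).re) : ℝ) : ℂ)
    = ↑J * ((a - (starRingEnd ℂ) a) * Complex.I) := by
  have h : ((a*Complex.I).re : ℂ) = a.im * (Complex.I*Complex.I) := by
    simp [Complex.mul_re, Complex.I_mul_I]
  push_cast
  rw [h, Complex.sub_conj]
  push_cast; ring


/-- weakening: if `u(x,y) = 2·Re(A(x+iy))` with `A` holomorphic and
`A' ≠ 0` satisfies the modified equation with coefficient `j`, then there is a real
constant `k` with `A'''·A' − (A'')² = k·(A')⁴` on `Ω`. -/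
theorem weakened_equation_from_modified_problem
    (Ω : Set ℂ) (hΩ : IsOpen Ω) (hconn : IsPreconnected Ω)
    (A : ℂ → ℂ) (hA : DifferentiableOn ℂ A Ω)
    (hA' : ∀ z ∈ Ω, deriv A z ≠ 0)
    (j : ℝ → ℝ) (hj : Differentiable ℝ j)
    (u : ℝ × ℝ → ℝ)
    (hu : ∀ p : ℝ × ℝ, u p = 2 * (A (↑p.1 + ↑p.2 * Complex.I)).re)
    (hmod : SatisfiesModified u j {p : ℝ × ℝ | (↑p.1 + ↑p.2 * Complex.I) ∈ Ω}) :
    ∃ k : ℝ, ∀ z ∈ Ω,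
      deriv (deriv (deriv A)) z * deriv A z - (deriv (deriv A) z) ^ 2 =
        (k : ℂ) * (deriv A z) ^ 4 := by
  rw [SatisfiesModified] at hmod
  set Ω' : Set (ℝ × ℝ) := eC ⁻¹' Ω with hΩ'def
  have hΩ'open : IsOpen Ω' := hΩ.preimage eC.continuous
  have hAn : AnalyticOnNhd ℂ A Ω := hA.analyticOnNhd hΩ
  have hAn1 : AnalyticOnNhd ℂ (deriv A) Ω := hAn.deriv
  have hAn2 : AnalyticOnNhd ℂ (deriv (deriv A)) Ω := hAn1.deriv
  -- u has the right form
  have hufun : u = fun q => 2 * (A (eC q)).re := funext fun q => by rw [hu, eC_apply]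
  -- first partials
  have hpx : ∀ p ∈ Ω', px u p = 2 * (deriv A (eC p)).re := by
    intro p hp
    have h := re_comp_hasFDerivAt (f := A) (p := p) ((hAn (eC p) hp).differentiableAt) 2
    rw [px, hufun, h.fderiv]
    simp [eC_e1]
  have hpy : ∀ p ∈ Ω', py u p = -2 * (deriv A (eC p)).im := by
    intro p hp
    have h := re_comp_hasFDerivAt (f := A) (p := p) ((hAn (eC p) hp).differentiableAt) 2
    rw [py, hufun, h.fderiv]
    simp [eC_e2]
  -- second partials
  have hpxx : ∀ p ∈ Ω', px (px u) p = 2 * (deriv (deriv A) (eC p)).re := by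
    intro p hp
    have heq : px u =ᶠ[nhds p] (fun q => 2 * (deriv A (eC q)).re) :=
      Filter.eventuallyEq_of_mem (hΩ'open.mem_nhds hp) hpx
    have h := re_comp_hasFDerivAt (f := deriv A) (p := p) ((hAn1 (eC p) hp).differentiableAt) 2
    rw [px, heq.fderiv_eq, h.fderiv]
    simp [eC_e1]
  have hpxy : ∀ p ∈ Ω', py (px u) p = -2 * (deriv (deriv A) (eC p)).im := by
    intro p hp
    have heq : px u =ᶠ[nhds p] (fun q => 2 * (deriv A (eC q)).re) :=
      Filter.eventuallyEq_of_mem (hΩ'open.mem_nhds hp) hpx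
    have h := re_comp_hasFDerivAt (f := deriv A) (p := p) ((hAn1 (eC p) hp).differentiableAt) 2
    rw [py, heq.fderiv_eq, h.fderiv]
    simp [eC_e2]
  have hpyy : ∀ p ∈ Ω', py (py u) p = -2 * (deriv (deriv A) (eC p)).re := by
    intro p hp
    have heq : py u =ᶠ[nhds p] (fun q => -2 * (deriv A (eC q)).im) :=
      Filter.eventuallyEq_of_mem (hΩ'open.mem_nhds hp) hpy
    have h := im_comp_hasFDerivAt (f := deriv A) (p := p) ((hAn1 (eC p) hp).differentiableAt) (-2)
    rw [py, heq.fderiv_eq, h.fderiv]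
    simp [eC_e2]
  have hmem : ∀ p : ℝ × ℝ, p ∈ Ω' → (↑p.1 + ↑p.2 * Complex.I) ∈ Ω := by
    intro p hp; rw [← eC_apply]; exact hp
  have hE0 : ∀ p ∈ Ω',
      (deriv A (eC p))^2 * (starRingEnd ℂ) (deriv (deriv A) (eC p))
        + ((starRingEnd ℂ) (deriv A (eC p)))^2 * (deriv (deriv A) (eC p))
        = ((j (u p) : ℝ) : ℂ) * (deriv A (eC p) * (starRingEnd ℂ) (deriv A (eC p))) := by
    intro p hp
    have hm := hmod p (hmem p hp)
    rw [hpx p hp, hpy p hp, hpxx p hp, hpxy p hp, hpyy p hp] at hm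
    rw [Complex.ext_iff]
    constructor
    · simp only [Complex.add_re, Complex.mul_re, Complex.mul_im, Complex.conj_re,
        Complex.conj_im, Complex.ofReal_re, Complex.ofReal_im, pow_two]
      linear_combination hm / 8
    · simp only [Complex.add_im, Complex.mul_re, Complex.mul_im, Complex.conj_re,
        Complex.conj_im, Complex.ofReal_re, Complex.ofReal_im, pow_two]
      ring
  have hfinal : ∀ p ∈ Ω',
      ((starRingEnd ℂ) (deriv A (eC p)))^4 *
          (deriv (deriv (deriv A)) (eC p) * deriv A (eC p) - (deriv (deriv A) (eC p))^2)
        = (deriv A (eC p))^4 *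
          ((starRingEnd ℂ) (deriv (deriv (deriv A)) (eC p)) * (starRingEnd ℂ) (deriv A (eC p))
            - ((starRingEnd ℂ) (deriv (deriv A) (eC p)))^2) := by
    intro p hp
    have hda : DifferentiableAt ℂ (deriv A) (eC p) := (hAn1 _ hp).differentiableAt
    have hdb : DifferentiableAt ℂ (deriv (deriv A)) (eC p) := (hAn2 _ hp).differentiableAt
    have h1 : HasFDerivAt (fun q => deriv A (eC q))
        ((ContinuousLinearMap.mul ℝ ℂ (deriv (deriv A) (eC p))).comp eC) p :=
      hasFDerivAt_comp_eC hda
    have h3 : HasFDerivAt (fun q => deriv (deriv A) (eC q))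
        ((ContinuousLinearMap.mul ℝ ℂ (deriv (deriv (deriv A)) (eC p))).comp eC) p :=
      hasFDerivAt_comp_eC hdb
    have h2 : HasFDerivAt (fun q => (starRingEnd ℂ) (deriv A (eC q)))
        (Complex.conjCLE.toContinuousLinearMap.comp
          ((ContinuousLinearMap.mul ℝ ℂ (deriv (deriv A) (eC p))).comp eC)) p := by
      have := Complex.conjCLE.toContinuousLinearMap.hasFDerivAt.comp p h1
      simpa [Function.comp_def] using this
    have h4 : HasFDerivAt (fun q => (starRingEnd ℂ) (deriv (deriv A) (eC q)))
        (Complex.conjCLE.toContinuousLinearMap.comp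
          ((ContinuousLinearMap.mul ℝ ℂ (deriv (deriv (deriv A)) (eC p))).comp eC)) p := by
      have := Complex.conjCLE.toContinuousLinearMap.hasFDerivAt.comp p h3
      simpa [Function.comp_def] using this
    have hu' : HasFDerivAt u
        ((2:ℝ) • (Complex.reCLM.comp ((ContinuousLinearMap.mul ℝ ℂ (deriv A (eC p))).comp eC))) p := by
      rw [hufun]; exact re_comp_hasFDerivAt ((hAn _ hp).differentiableAt) 2
    have hju : HasFDerivAt (fun q => ((j (u q) : ℝ) : ℂ))
        (Complex.ofRealCLM.comp ((deriv j (u p)) •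
          ((2:ℝ) • (Complex.reCLM.comp ((ContinuousLinearMap.mul ℝ ℂ (deriv A (eC p))).comp eC))))) p := by
      have hj1 : HasDerivAt j (deriv j (u p)) (u p) := (hj (u p)).hasDerivAt
      have := Complex.ofRealCLM.hasFDerivAt.comp p (hj1.comp_hasFDerivAt p hu')
      simpa [Function.comp_def, ContinuousLinearMap.comp_smul] using this
    have hH' := (((h1.mul h1).mul h4).add ((h2.mul h2).mul h3)).sub (hju.mul (h1.mul h2))
    have hev : (fun _ : ℝ × ℝ => (0:ℂ)) =ᶠ[nhds p]
        (fun q => (fun y => (fun y => deriv A (eC y) * deriv A (eC y)) y *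
            (starRingEnd ℂ) (deriv (deriv A) (eC y))) q +
          (fun y => (fun y => (starRingEnd ℂ) (deriv A (eC y)) * (starRingEnd ℂ) (deriv A (eC y))) y *
            deriv (deriv A) (eC y)) q -
          ((j (u q) : ℝ) : ℂ) * ((fun y => deriv A (eC y) * (starRingEnd ℂ) (deriv A (eC y))) q)) := by
      refine Filter.eventuallyEq_of_mem (hΩ'open.mem_nhds hp) (fun q hq => ?_)
      have := hE0 q hq
      simp only
      linear_combination -this
    have hD := (hH'.congr_of_eventuallyEq hev).unique (hasFDerivAt_const 0 p)
    have h10 := congrArg (fun L : (ℝ × ℝ) →L[ℝ] ℂ => L (1,0)) hD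
    have h01 := congrArg (fun L : (ℝ × ℝ) →L[ℝ] ℂ => L (0,1)) hD
    simp only [ContinuousLinearMap.add_apply, ContinuousLinearMap.coe_sub', Pi.sub_apply,
      ContinuousLinearMap.smul_apply, ContinuousLinearMap.coe_comp', Function.comp_apply,
      ContinuousLinearMap.mul_apply', eC_e1, eC_e2, ContinuousLinearMap.zero_apply,
      ContinuousLinearEquiv.coe_coe, Complex.conjCLE_apply, Complex.ofRealCLM_apply,
      Complex.reCLM_apply, smul_eq_mul, mul_one, Pi.mul_apply] at h10 h01
    set a := deriv A (eC p) with ha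
    set b := deriv (deriv A) (eC p) with hb
    set c := deriv (deriv (deriv A)) (eC p) with hc
    set J := j (u p) with hJdef
    set J' := deriv j (u p) with hJ'def
    rw [cast1] at h10
    simp only [map_mul, Complex.conj_I] at h01
    rw [cast2] at h01
    have hB : -(a*a*((starRingEnd ℂ) c)) + 2*a*b*((starRingEnd ℂ) b)
        + ((starRingEnd ℂ) a)^2*c - 2*((starRingEnd ℂ) a)*b*((starRingEnd ℂ) b)
        + ↑J*a*((starRingEnd ℂ) b) - ↑J*((starRingEnd ℂ) a)*b
        - a*((starRingEnd ℂ) a)*↑J'*(a - (starRingEnd ℂ) a) = 0 := by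
      have h : Complex.I * (-(a*a*((starRingEnd ℂ) c)) + 2*a*b*((starRingEnd ℂ) b)
          + ((starRingEnd ℂ) a)^2*c - 2*((starRingEnd ℂ) a)*b*((starRingEnd ℂ) b)
          + ↑J*a*((starRingEnd ℂ) b) - ↑J*((starRingEnd ℂ) a)*b
          - a*((starRingEnd ℂ) a)*↑J'*(a - (starRingEnd ℂ) a)) = 0 := by
        linear_combination h01
      exact (mul_eq_zero.mp h).resolve_left Complex.I_ne_zero
    have hC : a^2*((starRingEnd ℂ) c) + 2*((starRingEnd ℂ) a)*b*((starRingEnd ℂ) b)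
        - ↑J*a*((starRingEnd ℂ) b) - ↑J'*a*((starRingEnd ℂ) a)^2 = 0 := by
      linear_combination h10/2 - hB/2
    have hCc : ((starRingEnd ℂ) a)^2*c + 2*a*((starRingEnd ℂ) b)*b
        - ↑J*((starRingEnd ℂ) a)*b - ↑J'*((starRingEnd ℂ) a)*a^2 = 0 := by
      have h := congrArg (starRingEnd ℂ) hC
      simp only [map_add, map_sub, map_mul, map_pow, map_ofNat, Complex.conj_conj,
        Complex.conj_ofReal, map_zero] at h
      linear_combination h
    linear_combination (-(a^2*((starRingEnd ℂ) a)))*hC + (a*((starRingEnd ℂ) a)^2)*hCc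
      + (a^2*((starRingEnd ℂ) b) - ((starRingEnd ℂ) a)^2*b)*(hE0 p hp)
  -- transfer to Ω
  have hfz : ∀ z ∈ Ω,
      ((starRingEnd ℂ) (deriv A z))^4 *
          (deriv (deriv (deriv A)) z * deriv A z - (deriv (deriv A) z)^2)
        = (deriv A z)^4 *
          ((starRingEnd ℂ) (deriv (deriv (deriv A)) z) * (starRingEnd ℂ) (deriv A z)
            - ((starRingEnd ℂ) (deriv (deriv A) z))^2) := by
    intro z hz
    have hez : eC (z.re, z.im) = z := by rw [eC_apply]; exact Complex.re_add_im z
    have hp : (z.re, z.im) ∈ Ω' := by show eC _ ∈ Ω; rw [hez]; exact hz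
    have h := hfinal _ hp
    rwa [hez] at h
  set S : ℂ → ℂ := fun z =>
    (deriv (deriv (deriv A)) z * deriv A z - (deriv (deriv A) z)^2) / (deriv A z)^4 with hSdef
  have hd1 : DifferentiableOn ℂ (deriv A) Ω := hAn1.differentiableOn
  have hd2 : DifferentiableOn ℂ (deriv (deriv A)) Ω := hAn2.differentiableOn
  have hd3 : DifferentiableOn ℂ (deriv (deriv (deriv A))) Ω := hAn2.deriv.differentiableOn
  have hSdiff : DifferentiableOn ℂ S Ω :=
    ((hd3.mul hd1).sub (hd2.pow 2)).div (hd1.pow 4) (fun z hz => pow_ne_zero 4 (hA' z hz))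
  have hSim : ∀ z ∈ Ω, (starRingEnd ℂ) (S z) = S z := by
    intro z hz
    have ha0 : deriv A z ≠ 0 := hA' z hz
    have hca0 : (starRingEnd ℂ) (deriv A z) ≠ 0 := by
      exact (map_ne_zero (starRingEnd ℂ)).mpr ha0
    have ha4 : (deriv A z)^4 ≠ 0 := pow_ne_zero 4 ha0
    have hca4 : ((starRingEnd ℂ) (deriv A z))^4 ≠ 0 := pow_ne_zero 4 hca0
    have hSz : S z = (deriv (deriv (deriv A)) z * deriv A z - deriv (deriv A) z ^ 2)
        / deriv A z ^ 4 := rfl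
    rw [hSz, map_div₀, map_sub, map_mul, map_pow, map_pow]
    rw [div_eq_div_iff hca4 ha4]
    linear_combination -(hfz z hz)
  have him0 : ∀ w ∈ Ω, (S w).im = 0 := fun w hw => Complex.conj_eq_iff_im.mp (hSim w hw)
  have hder0 : ∀ z ∈ Ω, deriv S z = 0 := by
    intro z hz
    have hd : HasDerivAt S (deriv S z) z :=
      (hSdiff.differentiableAt (hΩ.mem_nhds hz)).hasDerivAt
    have hg1 : HasDerivAt (fun t : ℝ => z + (↑t : ℂ)) (1:ℂ) 0 := by
      simpa using (Complex.ofRealCLM.hasDerivAt (x := (0:ℝ))).const_add z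
    have hd' : HasDerivAt S (deriv S z) (z + ((0:ℝ):ℂ)) := by simpa using hd
    have hc1 : HasDerivAt (fun t : ℝ => S (z + (↑t : ℂ))) (deriv S z) 0 := by
      simpa [Function.comp_def] using hd'.scomp (0:ℝ) hg1
    have hc2 : HasDerivAt (fun t : ℝ => (S (z + (↑t : ℂ))).im) ((deriv S z).im) 0 := by
      refine (Complex.imCLM.hasFDerivAt.comp (0:ℝ) hc1.hasFDerivAt).hasDerivAt.congr_deriv ?_
      simp
    have hmem1 : ∀ᶠ t : ℝ in nhds 0, z + (↑t : ℂ) ∈ Ω := by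
      have hcont : ContinuousAt (fun t : ℝ => z + (↑t : ℂ)) 0 := by fun_prop
      have h0 : z + ((0:ℝ):ℂ) ∈ Ω := by simpa using hz
      exact hcont (hΩ.mem_nhds h0)
    have hev1 : (fun t : ℝ => (S (z + (↑t : ℂ))).im) =ᶠ[nhds (0:ℝ)] (fun _ => 0) := by
      filter_upwards [hmem1] with t ht
      exact him0 _ ht
    have him : (deriv S z).im = 0 :=
      (hc2.congr_of_eventuallyEq hev1.symm).unique (hasDerivAt_const 0 0)
    have hg2 : HasDerivAt (fun t : ℝ => z + (↑t : ℂ) * Complex.I) (Complex.I) 0 := by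
      simpa using ((Complex.ofRealCLM.hasDerivAt (x := (0:ℝ))).mul_const Complex.I).const_add z
    have hd'' : HasDerivAt S (deriv S z) (z + ((0:ℝ):ℂ) * Complex.I) := by simpa using hd
    have hc1' : HasDerivAt (fun t : ℝ => S (z + (↑t : ℂ) * Complex.I))
        (Complex.I * deriv S z) 0 := by
      simpa [Function.comp_def, smul_eq_mul] using hd''.scomp (0:ℝ) hg2
    have hc2' : HasDerivAt (fun t : ℝ => (S (z + (↑t : ℂ) * Complex.I)).im)
        ((Complex.I * deriv S z).im) 0 := by
      refine (Complex.imCLM.hasFDerivAt.comp (0:ℝ) hc1'.hasFDerivAt).hasDerivAt.congr_deriv ?_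
      simp
    have hmem2 : ∀ᶠ t : ℝ in nhds 0, z + (↑t : ℂ) * Complex.I ∈ Ω := by
      have hcont : ContinuousAt (fun t : ℝ => z + (↑t : ℂ) * Complex.I) 0 := by fun_prop
      have h0 : z + ((0:ℝ):ℂ) * Complex.I ∈ Ω := by simpa using hz
      exact hcont (hΩ.mem_nhds h0)
    have hev2 : (fun t : ℝ => (S (z + (↑t : ℂ) * Complex.I)).im) =ᶠ[nhds (0:ℝ)]
        (fun _ => 0) := by
      filter_upwards [hmem2] with t ht
      exact him0 _ ht
    have hre : (Complex.I * deriv S z).im = 0 :=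
      (hc2'.congr_of_eventuallyEq hev2.symm).unique (hasDerivAt_const 0 0)
    simp only [Complex.mul_im, Complex.I_re, Complex.I_im, zero_mul, one_mul, zero_add] at hre
    exact Complex.ext hre him
  rcases Set.eq_empty_or_nonempty Ω with hemp | ⟨z₀, hz₀⟩
  · exact ⟨0, fun z hz => absurd hz (by simp [hemp])⟩
  · refine ⟨(S z₀).re, fun z hz => ?_⟩
    obtain ⟨ε, hε, hball⟩ := Metric.isOpen_iff.mp hΩ z₀ hz₀
    have hconst : ∀ x ∈ Metric.ball z₀ ε, S x = S z₀ := by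
      intro x hx
      refine Convex.is_const_of_fderivWithin_eq_zero (convex_ball z₀ ε)
        (hSdiff.mono hball) (fun y hy => ?_) hx (Metric.mem_ball_self hε)
      rw [fderivWithin_of_isOpen Metric.isOpen_ball hy]
      ext v
      rw [fderiv_eq_smul_deriv, hder0 y (hball hy)]
      simp
    have hev : S =ᶠ[nhds z₀] (fun _ => S z₀) :=
      Filter.eventuallyEq_of_mem (Metric.ball_mem_nhds z₀ hε) hconst
    have hSan : AnalyticOnNhd ℂ S Ω := hSdiff.analyticOnNhd hΩ
    have hEq : Set.EqOn S (fun _ => S z₀) Ω :=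
      hSan.eqOn_of_preconnected_of_eventuallyEq analyticOnNhd_const hconn hz₀ hev
    have hk : S z₀ = (((S z₀).re : ℝ) : ℂ) := by
      have h := him0 z₀ hz₀
      exact Complex.ext (by simp) (by simp [h])
    have ha4 : (deriv A z)^4 ≠ 0 := pow_ne_zero 4 (hA' z hz)
    have hSz2 : S z = (((S z₀).re : ℝ) : ℂ) := by rw [← hk]; exact hEq hz
    have hfinal2 : (deriv (deriv (deriv A)) z * deriv A z - (deriv (deriv A) z)^2)
        / (deriv A z)^4 = (((S z₀).re : ℝ) : ℂ) := by rw [← hSz2]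
    exact (div_eq_iff ha4).mp hfinal2
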